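/- Let P be a joint probability mass function of (X_j, X_{-j}, Y, S), where X_j takes values in a finite type, X_{-j} in a finite product type, Y in a finite type, and S ∈ {0,1}. Fix a value y of Y and assume that P(X_j = s, X_{-j} = x_{-j}, Y = y) > 0 for every (s, x_{-j}). Assume X_j ⊥ Y | X_{-j} under the marginal law of (X_j, X_{-j}, Y). Define the weight w(s, x_{-j}) = P(S = 1 | X_j = s, X_{-j} = x_{-j}, Y = y), assume Z := Σ_{(s,x_{-j})} P(X_j = s, X_{-j} = x_{-j}) · w(s, x_{-j}) > 0, and define the tilted pmf Q_y(s, x_{-j}) = P(X_j = s, X_{-j} = x_{-j}) · w(s, x_{-j}) / Z. Then for every t and x_{-j} such that P(X_{-j} = x_{-j}, Y = y, S = 1) > 0 and Q_y(X_{-j} = x_{-j}) > 0, one has Q_y(X_j = t | X_{-j} = x_{-j}) = P(X_j = t | X_{-j} = x_{-j}, Y = y, S = 1). -/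

import Mathlib

open scoped Classical

/-- **Theorem 1 (discrete form).** Tilting the population covariate distribution by the
selection probability `P(S = 1 | X, Y = y)` reproduces the conditional distribution of a null
coordinate given the others in the selected sample `L(X, Y) = P(X, Y | S = 1)`. -/
theorem tilted_conditional_matches_selected_sample
    {𝒳j 𝒳m 𝒴 : Type*} [Fintype 𝒳j] [Fintype 𝒳m] [Fintype 𝒴]
    [Nonempty 𝒳j] [Nonempty 𝒳m] [Nonempty 𝒴]
    -- joint pmf of (X_j, X_{-j}, Y, S), with S : Bool (S = true ↔ selected)
    (P : 𝒳j × 𝒳m × 𝒴 × Bool → ℝ)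
    (hPnn : ∀ a, 0 ≤ P a)
    (hPsum : ∑ a, P a = 1)
    -- the fixed value y of Y
    (y : 𝒴)
    -- P(X_j = s, X_{-j} = x, Y = y) > 0 for every (s, x)
    (hpos : ∀ s x, 0 < ∑ b, P (s, x, y, b))
    -- conditional independence X_j ⟂ Y | X_{-j} under the marginal law of (X_j, X_{-j}, Y):
    -- P(X_j = t, Y = y' | X_{-j} = x) = P(X_j = t | X_{-j} = x) · P(Y = y' | X_{-j} = x)
    (hCI : ∀ t y' x, 0 < (∑ s, ∑ y'', ∑ b, P (s, x, y'', b)) →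
      (∑ b, P (t, x, y', b)) / (∑ s, ∑ y'', ∑ b, P (s, x, y'', b)) =
        ((∑ y'', ∑ b, P (t, x, y'', b)) / (∑ s, ∑ y'', ∑ b, P (s, x, y'', b))) *
        ((∑ s, ∑ b, P (s, x, y', b)) / (∑ s, ∑ y'', ∑ b, P (s, x, y'', b))))
    -- the weight w(s, x) = P(S = 1 | X_j = s, X_{-j} = x, Y = y)
    (w : 𝒳j → 𝒳m → ℝ)
    (hw : ∀ s x, w s x = P (s, x, y, true) / ∑ b, P (s, x, y, b))
    -- the normalizing constant Z = Σ P(X_j = s, X_{-j} = x) · w(s, x) > 0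
    (Z : ℝ)
    (hZ : Z = ∑ s, ∑ x, (∑ y'', ∑ b, P (s, x, y'', b)) * w s x)
    (hZpos : 0 < Z)
    -- the tilted pmf Q_y(s, x) = P(X_j = s, X_{-j} = x) · w(s, x) / Z
    (Q : 𝒳j → 𝒳m → ℝ)
    (hQ : ∀ s x, Q s x = (∑ y'', ∑ b, P (s, x, y'', b)) * w s x / Z) :
    -- conclusion: Q_y(X_j = t | X_{-j} = x) = P(X_j = t | X_{-j} = x, Y = y, S = 1)
    ∀ t x, 0 < (∑ s, P (s, x, y, true)) → 0 < (∑ s, Q s x) →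
      Q t x / (∑ s, Q s x) = P (t, x, y, true) / (∑ s, P (s, x, y, true)) := by
  intro t x hsel hQpos
  have hApos : ∀ s, 0 < ∑ b, P (s, x, y, b) := fun s => hpos s x
  have hMpos : ∀ s : 𝒳j, 0 < ∑ y'' : 𝒴, ∑ b, P (s, x, y'', b) := by
    intro s
    refine lt_of_lt_of_le (hApos s) ?_
    exact Finset.single_le_sum (f := fun y'' => ∑ b, P (s, x, y'', b))
      (fun i _ => Finset.sum_nonneg fun b _ => hPnn _) (Finset.mem_univ y)
  have hTpos : 0 < ∑ s, ∑ y'' : 𝒴, ∑ b, P (s, x, y'', b) :=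
    Finset.sum_pos (fun s _ => hMpos s) Finset.univ_nonempty
  have hBpos : 0 < ∑ s, ∑ b, P (s, x, y, b) :=
    Finset.sum_pos (fun s _ => hApos s) Finset.univ_nonempty
  have hA : ∀ s, (∑ b, P (s, x, y, b)) =
      (∑ y'', ∑ b, P (s, x, y'', b)) * (∑ s, ∑ b, P (s, x, y, b)) /
        (∑ s, ∑ y'', ∑ b, P (s, x, y'', b)) := by
    intro s
    have h := hCI s y x hTpos
    rw [div_mul_div_comm, div_eq_div_iff hTpos.ne' (mul_pos hTpos hTpos).ne'] at h
    rw [eq_div_iff hTpos.ne']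
    exact mul_right_cancel₀ hTpos.ne' (by rw [mul_assoc]; exact h)
  have hQ' : ∀ s, Q s x = P (s, x, y, true) *
      ((∑ s, ∑ y'', ∑ b, P (s, x, y'', b)) / ((∑ s, ∑ b, P (s, x, y, b)) * Z)) := by
    intro s
    rw [hQ, hw, hA s]
    have h1 := (hMpos s).ne'
    have h2 := hTpos.ne'
    have h3 := hBpos.ne'
    have h4 := hZpos.ne'
    field_simp
  have hc : ((∑ s, ∑ y'', ∑ b, P (s, x, y'', b)) / ((∑ s, ∑ b, P (s, x, y, b)) * Z)) ≠ 0 :=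
    (div_pos hTpos (mul_pos hBpos hZpos)).ne'
  rw [hQ' t, Finset.sum_congr rfl (fun s _ => hQ' s), ← Finset.sum_mul,
    mul_div_mul_right _ _ hc]
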